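/- Let p be an odd prime and let α, β, γ, σ be integers with β ≥ γ ≥ 1, α ≥ γ, α + σ ≥ 2γ, and 0 ≤ σ < γ. Let G be the group presented on two generators a, b by the relators a^{p^α}, b^{p^β}, [b,a]^{p^γ}, [a,b,a], [a,b,b], and a^{p^{α+σ-γ}}[b,a]^{p^σ} (for instance as a Mathlib PresentedGroup on FreeGroup (Fin 2) with these six relators). Then G is capable if and only if α = β. -/

import Mathlib

universe u

/-- A group is capable if it is a central quotient `H/Z(H)` of some group `H`. -/
def IsCapable (G : Type u) [Group G] : Prop :=
  ∃ (H : Type u) (_ : Group H), Nonempty ((H ⧸ Subgroup.center H) ≃* G)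

/-- The commutator `[x,y] = x⁻¹y⁻¹xy`. -/
def pcomm {G : Type*} [Group G] (x y : G) : G := x⁻¹ * y⁻¹ * x * y

/-- The six relators `a^{p^α}`, `b^{p^β}`, `[b,a]^{p^γ}`, `[a,b,a]`, `[a,b,b]`,
`a^{p^{α+σ-γ}}[b,a]^{p^σ}` in the free group on two generators. -/
def twoGenRels (p α β γ σ : ℕ) : Set (FreeGroup (Fin 2)) :=
  let a : FreeGroup (Fin 2) := FreeGroup.of 0
  let b : FreeGroup (Fin 2) := FreeGroup.of 1
  {a ^ p ^ α, b ^ p ^ β, pcomm b a ^ p ^ γ,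
   pcomm (pcomm a b) a, pcomm (pcomm a b) b,
   a ^ p ^ (α + σ - γ) * pcomm b a ^ p ^ σ}

namespace CapAux

/-- integer binomial (i choose 2) -/
def bin (i : ℤ) : ℤ := i * (i - 1) / 2

lemma two_dvd_sq (i : ℤ) : (2:ℤ) ∣ i * (i - 1) := by
  rcases Int.even_or_odd i with h | h
  · exact Dvd.dvd.mul_right h.two_dvd _
  · have : Even (i - 1) := by
      rcases h with ⟨k, hk⟩; exact ⟨k, by omega⟩
    exact Dvd.dvd.mul_left this.two_dvd _

lemma two_bin (i : ℤ) : 2 * bin i = i * (i - 1) :=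
  Int.mul_ediv_cancel' (two_dvd_sq i)

lemma bin_add (a b : ℤ) : bin (a + b) = bin a + bin b + a * b := by
  apply mul_left_cancel₀ (by norm_num : (2:ℤ) ≠ 0)
  rw [two_bin, mul_add, mul_add, two_bin, two_bin]; ring

lemma bin_neg (a : ℤ) : bin (-a) = bin a + a := by
  apply mul_left_cancel₀ (by norm_num : (2:ℤ) ≠ 0)
  rw [two_bin, mul_add, two_bin]; ring

@[simp] lemma bin_zero : bin 0 = 0 := rfl
@[simp] lemma bin_one : bin 1 = 0 := rfl

/-- if `d` is odd and `d ∣ i` then `d ∣ bin i`. -/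
lemma dvd_bin {d i : ℤ} (hd : Odd d) (h : d ∣ i) : d ∣ bin i := by
  obtain ⟨k, hk⟩ := h
  have h2 : (2:ℤ) ∣ k * (i - 1) := by
    rcases Int.even_or_odd k with he | ho
    · exact Dvd.dvd.mul_right he.two_dvd _
    · have : Odd i := by rw [hk]; exact hd.mul ho
      have : Even (i - 1) := by rcases this with ⟨m, hm⟩; exact ⟨m, by omega⟩
      exact Dvd.dvd.mul_left this.two_dvd _
    
  obtain ⟨c, hc⟩ := h2
  refine ⟨c, ?_⟩
  apply mul_left_cancel₀ (by norm_num : (2:ℤ) ≠ 0)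
  rw [hk] at hc
  rw [two_bin, hk, mul_assoc, hc]; ring

section PcommLemmas

variable {H : Type*} [Group H]

lemma pcomm_eq_one_iff {x y : H} : pcomm x y = 1 ↔ x * y = y * x := by
  unfold pcomm
  constructor
  · intro h
    have h2 := congrArg (fun t => y * (x * t)) h
    simpa [mul_assoc, eq_comm] using h2
  · intro h
    rw [mul_assoc, mul_assoc, h]
    simp [mul_assoc]

lemma pcomm_swap (x y : H) : pcomm y x = (pcomm x y)⁻¹ := by
  simp [pcomm, mul_assoc]

lemma conj_pcomm (u x : H) : x⁻¹ * u * x = u * pcomm u x := by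
  simp [pcomm, mul_assoc]

lemma pcomm_one_left (y : H) : pcomm 1 y = 1 := by simp [pcomm]

lemma pcomm_central_eq_one {z y : H} (hz : ∀ a : H, Commute z a) : pcomm z y = 1 :=
  pcomm_eq_one_iff.2 (hz y)

lemma map_pcomm {G2 : Type*} [Group G2] (f : H →* G2) (x y : H) :
    f (pcomm x y) = pcomm (f x) (f y) := by
  simp [pcomm]

lemma conj_zpow_eq (u x : H) (ht : ∀ a : H, Commute (pcomm u x) a) (k : ℤ) :
    x⁻¹ * u ^ k * x = u ^ k * (pcomm u x) ^ k := by
  have h1 : x⁻¹ * u ^ k * x = (x⁻¹ * u * x) ^ k := by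
    have : ∀ g : H, x⁻¹ * g * x = (MulAut.conj x⁻¹) g := by
      intro g; simp [MulAut.conj]
    rw [this, this, ← map_zpow]
  rw [h1, conj_pcomm]
  exact ((ht u).symm.mul_zpow k)

lemma pcomm_zpow_left (u x : H) (ht : ∀ a : H, Commute (pcomm u x) a) (k : ℤ) :
    pcomm (u ^ k) x = (pcomm u x) ^ k := by
  have h := conj_zpow_eq u x ht k
  show (u ^ k)⁻¹ * x⁻¹ * u ^ k * x = _
  rw [mul_assoc, mul_assoc, ← mul_assoc x⁻¹, h]
  simp [mul_assoc]

lemma pcomm_pow_left_succ (x y : H) (n : ℕ) :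
    pcomm (x ^ (n + 1)) y = x⁻¹ * pcomm (x ^ n) y * (y⁻¹ * x * y) := by
  simp [pcomm, pow_succ, mul_assoc]

lemma pcomm_pow_left (x y : H) (ht : ∀ a : H, Commute (pcomm (pcomm x y) x) a) (n : ℕ) :
    pcomm (x ^ n) y = (pcomm x y) ^ n * (pcomm (pcomm x y) x) ^ (n.choose 2) := by
  set u := pcomm x y with hu
  set t := pcomm u x with htdef
  induction n with
  | zero => simp [pcomm]
  | succ n ih =>
    rw [pcomm_pow_left_succ, ih]
    have hyxy : y⁻¹ * x * y = x * u := by simp [hu, pcomm, mul_assoc]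
    have hconj : x⁻¹ * u ^ (n:ℤ) * x = u ^ (n:ℤ) * t ^ (n:ℤ) := conj_zpow_eq u x ht n
    simp only [zpow_natCast] at hconj
    have hc : (n + 1).choose 2 = n.choose 2 + n := by
      rw [Nat.choose_two_right, Nat.choose_two_right]; exact Nat.triangle_succ n
    rw [hyxy, hc]
    calc x⁻¹ * (u ^ n * t ^ n.choose 2) * (x * u)
        = (x⁻¹ * u ^ n * x) * (t ^ n.choose 2 * u) := by
          have := (ht x).symm.zpow_left (n.choose 2 : ℤ)
          have hx : t ^ n.choose 2 * x = x * t ^ n.choose 2 := (ht x).pow_left _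
          rw [mul_assoc, mul_assoc, ← mul_assoc (t ^ n.choose 2), hx]
          simp [mul_assoc]
      _ = u ^ n * t ^ n * (t ^ n.choose 2 * u) := by rw [hconj]
      _ = u ^ (n+1) * t ^ (n.choose 2 + n) := by
          have h1 : t ^ n.choose 2 * u = u * t ^ n.choose 2 := (ht u).pow_left _
          have h2 : t ^ n * u = u * t ^ n := (ht u).pow_left _
          rw [h1, ← mul_assoc, mul_assoc (u^n), h2, ← mul_assoc, ← pow_succ, pow_add]
          rw [mul_assoc, mul_assoc, ← pow_add, Nat.add_comm n (n.choose 2)]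
          exact (mul_assoc _ _ _).symm

end PcommLemmas

/-! ### The integral Heisenberg group `H2` (free class-2 nilpotent of rank 2) -/

@[ext] structure H2 where
  x : ℤ
  y : ℤ
  z : ℤ

namespace H2

instance : Mul H2 := ⟨fun g h => ⟨g.x + h.x, g.y + h.y, g.z + h.z + g.y * h.x⟩⟩
instance : One H2 := ⟨⟨0, 0, 0⟩⟩
instance : Inv H2 := ⟨fun g => ⟨-g.x, -g.y, g.x * g.y - g.z⟩⟩

@[simp] lemma x_mk (a b c : ℤ) : (H2.mk a b c).x = a := rfl
@[simp] lemma y_mk (a b c : ℤ) : (H2.mk a b c).y = b := rfl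
@[simp] lemma z_mk (a b c : ℤ) : (H2.mk a b c).z = c := rfl

@[simp] lemma mul_def (g h : H2) :
    g * h = ⟨g.x + h.x, g.y + h.y, g.z + h.z + g.y * h.x⟩ := rfl
@[simp] lemma one_def : (1 : H2) = ⟨0, 0, 0⟩ := rfl
@[simp] lemma inv_def (g : H2) : g⁻¹ = ⟨-g.x, -g.y, g.x * g.y - g.z⟩ := rfl

instance : Group H2 where
  mul_assoc a b c := by ext <;> simp <;> ring
  one_mul a := by ext <;> simp
  mul_one a := by ext <;> simp
  inv_mul_cancel a := by ext <;> simp <;> ring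

def A : H2 := ⟨1, 0, 0⟩
def B : H2 := ⟨0, 1, 0⟩

lemma zpow_xz (u w : ℤ) : ∀ k : ℤ, (⟨u, 0, w⟩ : H2) ^ k = ⟨k * u, 0, k * w⟩ := by
  intro k
  induction k using Int.induction_on with
  | zero => ext <;> simp
  | succ n ih => rw [zpow_add_one, ih]; ext <;> simp <;> ring
  | pred n ih => rw [zpow_sub_one, ih]; ext <;> simp <;> ring

lemma zpow_B : ∀ k : ℤ, (B : H2) ^ k = ⟨0, k, 0⟩ := by
  intro k
  induction k using Int.induction_on with
  | zero => ext <;> simp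
  | succ n ih => rw [zpow_add_one, ih]; ext <;> simp [B]
  | pred n ih => rw [zpow_sub_one, ih]; ext <;> simp [B] <;> ring

lemma zpow_A (k : ℤ) : (A : H2) ^ k = ⟨k, 0, 0⟩ := by simpa [A] using zpow_xz 1 0 k

lemma zpow_y (v : ℤ) : ∀ k : ℤ, (⟨0, v, 0⟩ : H2) ^ k = ⟨0, k * v, 0⟩ := by
  intro k
  induction k using Int.induction_on with
  | zero => ext <;> simp
  | succ n ih => rw [zpow_add_one, ih]; ext <;> simp <;> ring
  | pred n ih => rw [zpow_sub_one, ih]; ext <;> simp <;> ring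

lemma zpow_z (w : ℤ) (k : ℤ) : (⟨0, 0, w⟩ : H2) ^ k = ⟨0, 0, k * w⟩ := by
  simpa using zpow_xz 0 w k

lemma pow_A (n : ℕ) : (A : H2) ^ n = ⟨n, 0, 0⟩ := by
  rw [← zpow_natCast, zpow_A]
lemma pow_B' (n : ℕ) : (B : H2) ^ n = ⟨0, n, 0⟩ := by
  rw [← zpow_natCast, zpow_B]
lemma pow_z (w : ℤ) (n : ℕ) : (⟨0, 0, w⟩ : H2) ^ n = ⟨0, 0, n * w⟩ := by
  rw [← zpow_natCast, zpow_z]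

lemma pcomm_BA : pcomm B A = ⟨0, 0, 1⟩ := by
  ext <;> simp [pcomm, A, B]

lemma z_central (w : ℤ) (g : H2) : (⟨0, 0, w⟩ : H2) * g = g * ⟨0, 0, w⟩ := by
  ext <;> simp <;> ring

lemma pcomm_z_left (w : ℤ) (g : H2) : pcomm (⟨0, 0, w⟩ : H2) g = 1 :=
  pcomm_eq_one_iff.2 (z_central w g)

lemma pcomm_AB : pcomm A B = ⟨0, 0, -1⟩ := by
  ext <;> simp [pcomm, A, B]

lemma decomp (g : H2) : g = A ^ g.x * B ^ g.y * (⟨0,0,1⟩ : H2) ^ g.z := by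
  rw [zpow_A, zpow_B, zpow_z]; ext <;> simp

lemma decomp' (g : H2) : A ^ g.x * (⟨0,0,1⟩ : H2) ^ g.z * B ^ g.y = g := by
  rw [zpow_A, zpow_z, zpow_B]; ext <;> simp

lemma closure_AB : Subgroup.closure ({A, B} : Set H2) = ⊤ := by
  rw [eq_top_iff]
  intro g _
  have hA : (A : H2) ∈ Subgroup.closure ({A, B} : Set H2) :=
    Subgroup.subset_closure (by simp)
  have hB : (B : H2) ∈ Subgroup.closure ({A, B} : Set H2) :=
    Subgroup.subset_closure (by simp)
  have hC : (⟨0,0,1⟩ : H2) ∈ Subgroup.closure ({A, B} : Set H2) := by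
    rw [← pcomm_BA]
    exact Subgroup.mul_mem _ (Subgroup.mul_mem _ (Subgroup.mul_mem _
      (Subgroup.inv_mem _ hB) (Subgroup.inv_mem _ hA)) hB) hA
  rw [decomp g]
  exact Subgroup.mul_mem _ (Subgroup.mul_mem _ (Subgroup.zpow_mem _ hA _)
    (Subgroup.zpow_mem _ hB _)) (Subgroup.zpow_mem _ hC _)

end H2

section SN

variable (p α β γ σ : ℕ)

/-- The subgroup of `H2` which is the normal closure of the four relator images. -/
def SN (hβγ : γ ≤ β) (hασ : 2 * γ ≤ α + σ) (hσγ : σ ≤ γ) : Subgroup H2 where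
  carrier := {g | (∃ k : ℤ, g.x = (p:ℤ)^(α+σ-γ) * k ∧ ((p:ℤ)^γ ∣ g.z - k * (p:ℤ)^σ)) ∧
      ((p:ℤ)^β ∣ g.y)}
  one_mem' := ⟨⟨0, by simp, by simp⟩, by simp⟩
  mul_mem' := by
    rintro a b ⟨⟨k, hk, hz⟩, hy⟩ ⟨⟨k', hk', hz'⟩, hy'⟩
    have hγβ : ((p:ℤ)^γ) ∣ ((p:ℤ)^β) := pow_dvd_pow _ hβγ
    refine ⟨⟨k + k', by simp [hk, hk']; try ring, ?_⟩, by simpa using dvd_add hy hy'⟩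
    have h3 : ((p:ℤ)^γ) ∣ a.y * b.x := hγβ.trans (Dvd.dvd.mul_right hy _)
    have : (a * b).z - (k + k') * (p:ℤ)^σ
        = (a.z - k * (p:ℤ)^σ) + (b.z - k' * (p:ℤ)^σ) + a.y * b.x := by
      simp; ring
    rw [this]
    exact dvd_add (dvd_add hz hz') h3
  inv_mem' := by
    rintro a ⟨⟨k, hk, hz⟩, hy⟩
    have hγβ : ((p:ℤ)^γ) ∣ ((p:ℤ)^β) := pow_dvd_pow _ hβγ
    refine ⟨⟨-k, by simp [hk]; try ring, ?_⟩, by simpa using hy.neg_right⟩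
    have h3 : ((p:ℤ)^γ) ∣ a.x * a.y := hγβ.trans (Dvd.dvd.mul_left hy _)
    have : (a⁻¹).z - (-k) * (p:ℤ)^σ = a.x * a.y - (a.z - k * (p:ℤ)^σ) := by
      simp; ring
    rw [this]
    exact dvd_sub h3 hz

variable {p α β γ σ : ℕ} (hβγ : γ ≤ β) (hασ : 2 * γ ≤ α + σ) (hσγ : σ ≤ γ) (hαγ : γ ≤ α)

lemma SN_normal : (SN p α β γ σ hβγ hασ hσγ).Normal := by
  constructor
  rintro a ⟨⟨k, hk, hz⟩, hy⟩ g
  have hγm : ((p:ℤ)^γ) ∣ ((p:ℤ)^(α+σ-γ)) := pow_dvd_pow _ (by omega)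
  have hγβ : ((p:ℤ)^γ) ∣ ((p:ℤ)^β) := pow_dvd_pow _ hβγ
  have hx : (g * a * g⁻¹).x = a.x := by simp; try ring
  have hyy : (g * a * g⁻¹).y = a.y := by simp; try ring
  have hzz : (g * a * g⁻¹).z = a.z + g.y * a.x - a.y * g.x := by simp; ring
  refine ⟨⟨k, by rw [hx, hk], ?_⟩, by rw [hyy]; exact hy⟩
  rw [hzz]
  have h1 : ((p:ℤ)^γ) ∣ g.y * a.x := by
    rw [hk]; exact Dvd.dvd.mul_left (hγm.mul_right k) g.y
  have h2 : ((p:ℤ)^γ) ∣ a.y * g.x := hγβ.trans (Dvd.dvd.mul_right hy _)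
  have : a.z + g.y * a.x - a.y * g.x - k * (p:ℤ)^σ
      = (a.z - k * (p:ℤ)^σ) + g.y * a.x - a.y * g.x := by ring
  rw [this]
  exact dvd_sub (dvd_add hz h1) h2

lemma SN_A : (⟨(p:ℤ)^α, 0, 0⟩ : H2) ∈ SN p α β γ σ hβγ hασ hσγ := by
  refine ⟨⟨(p:ℤ)^(γ-σ), ?_, ?_⟩, by simp⟩
  · show ((p:ℤ)^α) = (p:ℤ)^(α+σ-γ) * (p:ℤ)^(γ-σ)
    rw [← pow_add]; congr 1; omega
  · show ((p:ℤ)^γ) ∣ (0 : ℤ) - (p:ℤ)^(γ-σ) * (p:ℤ)^σ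
    have : (0 : ℤ) - (p:ℤ)^(γ-σ) * (p:ℤ)^σ = -((p:ℤ)^γ) := by
      rw [← pow_add]
      have : γ - σ + σ = γ := by omega
      rw [this]; ring
    rw [this]; exact dvd_neg.2 dvd_rfl

lemma SN_B : (⟨0, (p:ℤ)^β, 0⟩ : H2) ∈ SN p α β γ σ hβγ hασ hσγ :=
  ⟨⟨0, by simp, by simp⟩, dvd_rfl⟩

lemma SN_C : (⟨0, 0, (p:ℤ)^γ⟩ : H2) ∈ SN p α β γ σ hβγ hασ hσγ :=
  ⟨⟨0, by simp, by simp⟩, by simp⟩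

lemma SN_W : (⟨(p:ℤ)^(α+σ-γ), 0, (p:ℤ)^σ⟩ : H2) ∈ SN p α β γ σ hβγ hασ hσγ :=
  ⟨⟨1, by simp, by simp⟩, by simp⟩

lemma dvd_of_A_mem (hp : 1 < p) (e : ℕ)
    (h : (⟨(p:ℤ)^e, 0, 0⟩ : H2) ∈ SN p α β γ σ hβγ hασ hσγ) : α ≤ e := by
  obtain ⟨⟨k, hk, hz⟩, -⟩ := h
  simp only [H2.x_mk, H2.z_mk] at hk hz
  have hσz : (0:ℤ) - k * (p:ℤ)^σ = -(k * (p:ℤ)^σ) := by ring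
  rw [hσz, dvd_neg] at hz
  have hps : ((p:ℤ)^σ) ≠ 0 := by positivity
  have hfac : ((p:ℤ)^γ) = (p:ℤ)^(γ-σ) * (p:ℤ)^σ := by
    rw [← pow_add]
    have : γ - σ + σ = γ := by omega
    rw [this]
  rw [hfac] at hz
  have h2 : ((p:ℤ)^(γ-σ)) ∣ k := by
    rcases hz with ⟨c, hc⟩
    refine ⟨c, ?_⟩
    apply mul_right_cancel₀ hps
    rw [hc]; ring
  obtain ⟨c, hc⟩ := h2
  have hk2 : ((p:ℤ))^e = (p:ℤ)^(α+σ-γ) * ((p:ℤ)^(γ-σ) * c) := by rw [← hc]; exact hk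
  have hfac2 : ((p:ℤ))^(α+σ-γ) * (p:ℤ)^(γ-σ) = (p:ℤ)^α := by
    rw [← pow_add]
    have : α + σ - γ + (γ - σ) = α := by omega
    rw [this]
  have hdvd : ((p:ℤ)^α) ∣ (p:ℤ)^e := ⟨c, by rw [hk2, ← mul_assoc, hfac2]⟩
  have hdvd2 : (p^α : ℕ) ∣ p^e := by exact_mod_cast hdvd
  exact (Nat.pow_dvd_pow_iff_le_right hp).1 hdvd2

lemma dvd_of_B_mem (hp : 1 < p) (e : ℕ)
    (h : (⟨0, (p:ℤ)^e, 0⟩ : H2) ∈ SN p α β γ σ hβγ hασ hσγ) : β ≤ e := by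
  obtain ⟨-, hy⟩ := h
  simp only [H2.y_mk] at hy
  have h2 : (p^β : ℕ) ∣ p^e := by exact_mod_cast hy
  exact (Nat.pow_dvd_pow_iff_le_right hp).1 h2

end SN

section Forward

variable {H G : Type*} [Group H] [Group G]

lemma mem_center_of_commute {x y g : H}
    (hgen : Subgroup.closure ({x, y} : Set H) ⊔ Subgroup.center H = ⊤)
    (hx : Commute g x) (hy : Commute g y) : g ∈ Subgroup.center H := by
  have hsub : Subgroup.closure ({x, y} : Set H) ≤ Subgroup.centralizer {g} := by
    rw [Subgroup.closure_le]
    rintro z (rfl | rfl)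
    · exact Subgroup.mem_centralizer_iff.2 (by rintro h rfl; exact hx.eq)
    · exact Subgroup.mem_centralizer_iff.2 (by rintro h rfl; exact hy.eq)
  have hsub2 : Subgroup.center H ≤ Subgroup.centralizer {g} := by
    intro z hz
    exact Subgroup.mem_centralizer_iff.2 (by
      rintro h rfl; exact Subgroup.mem_center_iff.1 hz _)
  have htop : (⊤ : Subgroup H) ≤ Subgroup.centralizer {g} := by
    rw [← hgen]; exact sup_le hsub hsub2
  rw [Subgroup.mem_center_iff]
  intro h
  have hmem := Subgroup.mem_centralizer_iff.1 (htop (Subgroup.mem_top h)) g rfl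
  exact hmem.symm

lemma mem_center_of_commute₂ {x y g : H}
    (hgen : Subgroup.closure ({x, y} : Set H) = ⊤)
    (hx : Commute g x) (hy : Commute g y) : g ∈ Subgroup.center H :=
  mem_center_of_commute (by rw [hgen]; exact top_sup_eq _) hx hy

lemma closure_sup_center (φ : (H ⧸ Subgroup.center H) ≃* G) {a b : G} {x y : H}
    (hgen : Subgroup.closure ({a, b} : Set G) = ⊤)
    (hx : QuotientGroup.mk' (Subgroup.center H) x = φ.symm a)
    (hy : QuotientGroup.mk' (Subgroup.center H) y = φ.symm b) :
    Subgroup.closure ({x, y} : Set H) ⊔ Subgroup.center H = ⊤ := by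
  set π := QuotientGroup.mk' (Subgroup.center H)
  have h1 : Subgroup.map π (Subgroup.closure ({x, y} : Set H))
      = Subgroup.closure ({φ.symm a, φ.symm b} : Set (H ⧸ Subgroup.center H)) := by
    rw [MonoidHom.map_closure]
    congr 1
    rw [Set.image_pair, hx, hy]
  have h2 : Subgroup.closure ({φ.symm a, φ.symm b} : Set (H ⧸ Subgroup.center H)) = ⊤ := by
    have hmap := MonoidHom.map_closure
      (φ.symm : G ≃* (H ⧸ Subgroup.center H)).toMonoidHom ({a, b} : Set G)
    rw [hgen] at hmap
    have himg : (⇑(φ.symm : G ≃* (H ⧸ Subgroup.center H)).toMonoidHom '' {a, b} : Set _)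
        = {φ.symm a, φ.symm b} := Set.image_pair _ _ _
    rw [himg] at hmap
    rw [← hmap]
    exact Subgroup.map_top_of_surjective _ φ.symm.surjective
  have h3 : Subgroup.comap π (Subgroup.map π (Subgroup.closure ({x, y} : Set H))) = ⊤ := by
    rw [h1, h2]; exact Subgroup.comap_top _
  rw [Subgroup.comap_map_eq, QuotientGroup.ker_mk'] at h3
  exact h3

lemma map_pcomm' {F : Type*} [FunLike F H G] [MonoidHomClass F H G] (f : F) (x y : H) :
    f (pcomm x y) = pcomm (f x) (f y) := by
  simp [pcomm, map_mul, map_inv]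

/-- The key consequence of capability: if `G = H/Z(H)` is generated by `a, b` subject to the
class-two relations, then `a ^ pβ = 1` and `b ^ pα = 1`. -/
lemma forward_key (φ : (H ⧸ Subgroup.center H) ≃* G) (a b : G)
    (hgen : Subgroup.closure ({a, b} : Set G) = ⊤)
    {pα pβ pγ : ℕ}
    (hγα : pγ ∣ pα.choose 2) (hγβ : pγ ∣ pβ.choose 2)
    (ha : a ^ pα = 1) (hb : b ^ pβ = 1)
    (hc : (pcomm b a) ^ pγ = 1)
    (h4 : pcomm (pcomm a b) a = 1) (h5 : pcomm (pcomm a b) b = 1) :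
    a ^ pβ = 1 ∧ b ^ pα = 1 := by
  classical
  set π := QuotientGroup.mk' (Subgroup.center H) with hπdef
  obtain ⟨x, hx⟩ := QuotientGroup.mk'_surjective (Subgroup.center H) (φ.symm a)
  obtain ⟨y, hy⟩ := QuotientGroup.mk'_surjective (Subgroup.center H) (φ.symm b)
  have hker : ∀ w : H, π w = 1 → w ∈ Subgroup.center H := by
    intro w hw
    have := QuotientGroup.eq_one_iff (N := Subgroup.center H) w
    exact this.1 hw
  -- lifting relations
  have hlift : ∀ (w : H) (g : G), π w = φ.symm g → g = 1 → w ∈ Subgroup.center H := by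
    intro w g hwg hg1
    apply hker
    rw [hwg, hg1, map_one]
  set u := pcomm x y with hu
  set t1 := pcomm u x with ht1
  set t2 := pcomm u y with ht2
  have hπu : π u = φ.symm (pcomm a b) := by
    rw [hu, map_pcomm' π, hx, hy, ← map_pcomm' φ.symm]
  have hcent_t1 : t1 ∈ Subgroup.center H := by
    apply hlift _ (pcomm (pcomm a b) a) _ h4
    rw [ht1, map_pcomm' π, hπu, hx, ← map_pcomm' φ.symm]
  have hcent_t2 : t2 ∈ Subgroup.center H := by
    apply hlift _ (pcomm (pcomm a b) b) _ h5
    rw [ht2, map_pcomm' π, hπu, hy, ← map_pcomm' φ.symm]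
  have ht1c : ∀ h : H, Commute t1 h := by
    intro h; exact ((Subgroup.mem_center_iff.1 hcent_t1 h).symm)
  have ht2c : ∀ h : H, Commute t2 h := by
    intro h; exact ((Subgroup.mem_center_iff.1 hcent_t2 h).symm)
  have hxα : x ^ pα ∈ Subgroup.center H := by
    apply hlift _ (a ^ pα) _ ha
    rw [map_pow, hx, map_pow]
  have hyβ : y ^ pβ ∈ Subgroup.center H := by
    apply hlift _ (b ^ pβ) _ hb
    rw [map_pow, hy, map_pow]
  have hvc : (pcomm y x) ^ pγ ∈ Subgroup.center H := by
    apply hlift _ ((pcomm b a) ^ pγ) _ hc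
    rw [map_pow, map_pcomm' π, hx, hy, map_pow, ← map_pcomm' φ.symm]
  -- t1 ^ pγ = 1
  have hswap : pcomm y x = u⁻¹ := by rw [pcomm_swap, hu]
  have hinvpow : (u⁻¹ : H) ^ pγ = u ^ (-(pγ : ℤ)) := by
    rw [inv_pow, ← zpow_natCast, ← zpow_neg]
  have ht1γ : t1 ^ pγ = 1 := by
    have h0 : pcomm ((pcomm y x) ^ pγ) x = 1 :=
      pcomm_central_eq_one (fun h => (Subgroup.mem_center_iff.1 hvc h).symm)
    rw [hswap, hinvpow, pcomm_zpow_left u x (by rw [← ht1]; exact ht1c)] at h0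
    rw [← ht1] at h0
    have : (t1 ^ (pγ : ℤ)) = 1 := by
      rwa [zpow_neg, inv_eq_one] at h0
    rwa [zpow_natCast] at this
  have ht2γ : t2 ^ pγ = 1 := by
    have h0 : pcomm ((pcomm y x) ^ pγ) y = 1 :=
      pcomm_central_eq_one (fun h => (Subgroup.mem_center_iff.1 hvc h).symm)
    rw [hswap, hinvpow, pcomm_zpow_left u y (by rw [← ht2]; exact ht2c)] at h0
    rw [← ht2] at h0
    have : (t2 ^ (pγ : ℤ)) = 1 := by
      rwa [zpow_neg, inv_eq_one] at h0
    rwa [zpow_natCast] at this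
  have ht1pow : ∀ e : ℕ, pγ ∣ e → t1 ^ e = 1 := by
    rintro e ⟨c, rfl⟩; rw [pow_mul, ht1γ, one_pow]
  have ht2pow : ∀ e : ℕ, pγ ∣ e → t2 ^ e = 1 := by
    rintro e ⟨c, rfl⟩; rw [pow_mul, ht2γ, one_pow]
  -- the main power identities
  have hmain : ∀ n : ℕ, pcomm (x ^ n) y = u ^ n * t1 ^ n.choose 2 := by
    intro n
    have := pcomm_pow_left x y (by rw [← hu, ← ht1]; exact ht1c) n
    rwa [← hu, ← ht1] at this
  -- the symmetric identity: pcomm (y ^ n) x = (u⁻¹) ^ n * (t2⁻¹) ^ choose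
  have ht2' : pcomm (pcomm y x) y = t2⁻¹ := by
    rw [hswap]
    have : (u⁻¹ : H) = u ^ (-1 : ℤ) := by rw [zpow_neg_one]
    rw [this, pcomm_zpow_left u y (by rw [← ht2]; exact ht2c), ← ht2, zpow_neg_one]
  have hmain' : ∀ n : ℕ, pcomm (y ^ n) x = (u⁻¹) ^ n * (t2⁻¹) ^ n.choose 2 := by
    intro n
    have hcen : ∀ h : H, Commute (pcomm (pcomm y x) y) h := by
      rw [ht2']; intro h; exact (ht2c h).inv_left
    have := pcomm_pow_left y x hcen n
    rwa [ht2', hswap] at this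
  -- u ^ pα = 1 and u ^ pβ = 1
  have huα : u ^ pα = 1 := by
    have h0 : pcomm (x ^ pα) y = 1 :=
      pcomm_central_eq_one (fun h => (Subgroup.mem_center_iff.1 hxα h).symm)
    rw [hmain, ht1pow _ hγα, mul_one] at h0
    exact h0
  have huβ : u ^ pβ = 1 := by
    have h0 : pcomm (y ^ pβ) x = 1 :=
      pcomm_central_eq_one (fun h => (Subgroup.mem_center_iff.1 hyβ h).symm)
    have ht2inv : (t2⁻¹ : H) ^ pβ.choose 2 = 1 := by
      rw [inv_pow, ht2pow _ hγβ, inv_one]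
    rw [hmain', ht2inv, mul_one, inv_pow, inv_eq_one] at h0
    exact h0
  -- x ^ pβ and y ^ pα are central
  have hgen2 : Subgroup.closure ({x, y} : Set H) ⊔ Subgroup.center H = ⊤ :=
    closure_sup_center φ hgen hx hy
  have hxβc : x ^ pβ ∈ Subgroup.center H := by
    refine mem_center_of_commute hgen2 ((Commute.refl x).pow_left pβ) ?_
    have h0 : pcomm (x ^ pβ) y = 1 := by
      rw [hmain pβ, huβ, ht1pow _ hγβ, one_mul]
    exact pcomm_eq_one_iff.1 h0
  have hyαc : y ^ pα ∈ Subgroup.center H := by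
    refine mem_center_of_commute hgen2 ?_ ((Commute.refl y).pow_left pα)
    have h0 : pcomm (y ^ pα) x = 1 := by
      rw [hmain' pα, inv_pow, huα, inv_one, one_mul, inv_pow, ht2pow _ hγα, inv_one]
    exact pcomm_eq_one_iff.1 h0
  constructor
  · have h1 : π (x ^ pβ) = 1 := (QuotientGroup.eq_one_iff _).2 hxβc
    rw [map_pow, hx, ← map_pow] at h1
    exact (MulEquiv.map_eq_one_iff φ.symm).1 h1
  · have h1 : π (y ^ pα) = 1 := (QuotientGroup.eq_one_iff _).2 hyαc
    rw [map_pow, hy, ← map_pow] at h1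
    exact (MulEquiv.map_eq_one_iff φ.symm).1 h1

end Forward

lemma pcomm_mk {G : Type*} [Group G] (N : Subgroup G) [N.Normal] (g h : G) :
    (pcomm (g : G ⧸ N) (h : G ⧸ N) : G ⧸ N) = ((pcomm g h : G) : G ⧸ N) := by
  simp [pcomm]

section NH2sec

variable (p α β γ σ : ℕ)

def NH2 : Subgroup H2 :=
  Subgroup.normalClosure
    {⟨(p:ℤ)^α,0,0⟩, ⟨0,(p:ℤ)^β,0⟩, ⟨0,0,(p:ℤ)^γ⟩, ⟨(p:ℤ)^(α+σ-γ),0,(p:ℤ)^σ⟩}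

instance : (NH2 p α β γ σ).Normal := Subgroup.normalClosure_normal

variable {p α β γ σ}
variable (hβγ : γ ≤ β) (hασ : 2*γ ≤ α+σ) (hσγ : σ ≤ γ)

lemma NH2_eq_SN : NH2 p α β γ σ = SN p α β γ σ hβγ hασ hσγ := by
  apply le_antisymm
  · letI : (SN p α β γ σ hβγ hασ hσγ).Normal := SN_normal hβγ hασ hσγ
    apply Subgroup.normalClosure_le_normal
    intro g hg
    simp only [Set.mem_insert_iff, Set.mem_singleton_iff] at hg
    rcases hg with rfl | rfl | rfl | rfl
    · exact SN_A hβγ hασ hσγ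
    · exact SN_B hβγ hασ hσγ
    · exact SN_C hβγ hασ hσγ
    · exact SN_W hβγ hασ hσγ
  · rintro g ⟨⟨k, hk, hz⟩, hy⟩
    obtain ⟨s, hs⟩ := hz
    obtain ⟨c, hc⟩ := hy
    have h1 : (⟨(p:ℤ)^(α+σ-γ),0,(p:ℤ)^σ⟩ : H2) ∈ NH2 p α β γ σ :=
      Subgroup.subset_normalClosure (by simp)
    have h2 : (⟨0,(p:ℤ)^β,0⟩ : H2) ∈ NH2 p α β γ σ :=
      Subgroup.subset_normalClosure (by simp)
    have h3 : (⟨0,0,(p:ℤ)^γ⟩ : H2) ∈ NH2 p α β γ σ :=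
      Subgroup.subset_normalClosure (by simp)
    have hdec : g = (⟨(p:ℤ)^(α+σ-γ),0,(p:ℤ)^σ⟩ : H2)^k * (⟨0,0,(p:ℤ)^γ⟩ : H2)^s
        * (⟨0,(p:ℤ)^β,0⟩ : H2)^c := by
      rw [H2.zpow_xz, H2.zpow_z, H2.zpow_y]
      ext
      · simp; linear_combination hk
      · simp; linear_combination hc
      · simp; linear_combination hs
    rw [hdec]
    exact Subgroup.mul_mem _ (Subgroup.mul_mem _ (Subgroup.zpow_mem _ h1 k)
      (Subgroup.zpow_mem _ h3 s)) (Subgroup.zpow_mem _ h2 c)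

end NH2sec

lemma pow_dvd_choose_two {p : ℕ} (hodd : Odd p) {γ e : ℕ} (h : γ ≤ e) :
    p ^ γ ∣ (p ^ e).choose 2 := by
  rw [Nat.choose_two_right]
  have hoe : Odd (p ^ e) := hodd.pow
  have h2 : 2 ∣ p ^ e - 1 := by obtain ⟨k, hk⟩ := hoe; omega
  rw [Nat.mul_div_assoc _ h2]
  exact dvd_mul_of_dvd_left (pow_dvd_pow p h) _

lemma closure_of_of {rels : Set (FreeGroup (Fin 2))} :
    Subgroup.closure ({PresentedGroup.of 0, PresentedGroup.of 1} :
      Set (PresentedGroup rels)) = ⊤ := by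
  have h := PresentedGroup.closure_range_of rels
  rw [← h]
  congr 1
  ext g
  simp [Set.range, Fin.exists_fin_two, eq_comm, or_comm]

section ForwardMain

variable {p α β γ σ : ℕ}

lemma forward_dir (hp : p.Prime) (hodd : Odd p)
    (hβγ : γ ≤ β) (hγ : 1 ≤ γ) (hαγ : γ ≤ α) (hασ : 2 * γ ≤ α + σ) (hσγ : σ < γ) :
    IsCapable (PresentedGroup (twoGenRels p α β γ σ)) → α = β := by
  rintro ⟨H, instH, ⟨φ⟩⟩
  set R := twoGenRels p α β γ σ with hR
  set a : PresentedGroup R := PresentedGroup.of 0 with ha'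
  set b : PresentedGroup R := PresentedGroup.of 1 with hb'
  have hrel : ∀ r ∈ R, (PresentedGroup.mk R r) = 1 := fun r hr =>
    (QuotientGroup.eq_one_iff r).2 (Subgroup.subset_normalClosure hr)
  -- the five relations needed by forward_key
  have hra : a ^ p ^ α = 1 := by
    have := hrel _ (show (FreeGroup.of 0 : FreeGroup (Fin 2)) ^ p ^ α ∈ R by
      simp [hR, twoGenRels])
    rwa [map_pow] at this
  have hrb : b ^ p ^ β = 1 := by
    have := hrel _ (show (FreeGroup.of 1 : FreeGroup (Fin 2)) ^ p ^ β ∈ R by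
      simp [hR, twoGenRels])
    rwa [map_pow] at this
  have hrc : (pcomm b a) ^ p ^ γ = 1 := by
    have := hrel _ (show (pcomm (FreeGroup.of 1) (FreeGroup.of 0) :
        FreeGroup (Fin 2)) ^ p ^ γ ∈ R by simp [hR, twoGenRels])
    rwa [map_pow, map_pcomm'] at this
  have hr4 : pcomm (pcomm a b) a = 1 := by
    have := hrel _ (show (pcomm (pcomm (FreeGroup.of 0) (FreeGroup.of 1))
        (FreeGroup.of 0) : FreeGroup (Fin 2)) ∈ R by simp [hR, twoGenRels])
    rwa [map_pcomm', map_pcomm'] at this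
  have hr5 : pcomm (pcomm a b) b = 1 := by
    have := hrel _ (show (pcomm (pcomm (FreeGroup.of 0) (FreeGroup.of 1))
        (FreeGroup.of 1) : FreeGroup (Fin 2)) ∈ R by simp [hR, twoGenRels])
    rwa [map_pcomm', map_pcomm'] at this
  obtain ⟨haβ, hbα⟩ := forward_key φ a b closure_of_of
    (pow_dvd_choose_two hodd hαγ) (pow_dvd_choose_two hodd hβγ) hra hrb hrc hr4 hr5
  -- now use the quotient H2 ⧸ NH2
  have hσγ' : σ ≤ γ := le_of_lt hσγ
  set NN := NH2 p α β γ σ with hNN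
  set f : Fin 2 → H2 ⧸ NN := ![↑H2.A, ↑H2.B] with hf
  have hmk : ∀ g : H2, g ∈ NN → ((g : H2 ⧸ NN) = 1) := fun g hg =>
    (QuotientGroup.eq_one_iff g).2 hg
  have hcastA : ∀ e : ℕ, (⟨((p^e : ℕ) : ℤ), 0, 0⟩ : H2) = ⟨(p:ℤ)^e, 0, 0⟩ := by
    intro e; ext <;> simp
  have hcastB : ∀ e : ℕ, (⟨0, ((p^e : ℕ) : ℤ), 0⟩ : H2) = ⟨0, (p:ℤ)^e, 0⟩ := by
    intro e; ext <;> simp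
  have hrels : ∀ r ∈ R, FreeGroup.lift f r = 1 := by
    intro r hr
    simp only [hR, twoGenRels, Set.mem_insert_iff, Set.mem_singleton_iff] at hr
    have hf0 : f 0 = ↑H2.A := rfl
    have hf1 : f 1 = ↑H2.B := rfl
    rcases hr with rfl | rfl | rfl | rfl | rfl | rfl
    · rw [map_pow, FreeGroup.lift_apply_of, hf0, ← QuotientGroup.mk_pow, H2.pow_A, hcastA]
      exact hmk _ (Subgroup.subset_normalClosure (by simp))
    · rw [map_pow, FreeGroup.lift_apply_of, hf1, ← QuotientGroup.mk_pow, H2.pow_B', hcastB]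
      exact hmk _ (Subgroup.subset_normalClosure (by simp))
    · rw [map_pow, map_pcomm', FreeGroup.lift_apply_of, FreeGroup.lift_apply_of, hf0, hf1,
        pcomm_mk, H2.pcomm_BA, ← QuotientGroup.mk_pow, H2.pow_z]
      refine hmk _ ?_
      have : ((p ^ γ : ℕ) : ℤ) * 1 = (p:ℤ)^γ := by push_cast; ring
      rw [this]
      exact Subgroup.subset_normalClosure (by simp)
    · rw [map_pcomm', map_pcomm', FreeGroup.lift_apply_of, FreeGroup.lift_apply_of, hf0, hf1,
        pcomm_mk, H2.pcomm_AB, pcomm_mk, H2.pcomm_z_left]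
      rfl
    · rw [map_pcomm', map_pcomm', FreeGroup.lift_apply_of, FreeGroup.lift_apply_of, hf0, hf1,
        pcomm_mk, H2.pcomm_AB, pcomm_mk, H2.pcomm_z_left]
      rfl
    · rw [map_mul, map_pow, map_pow, map_pcomm', FreeGroup.lift_apply_of, FreeGroup.lift_apply_of,
        hf0, hf1, pcomm_mk, H2.pcomm_BA, ← QuotientGroup.mk_pow, ← QuotientGroup.mk_pow,
        ← QuotientGroup.mk_mul, H2.pow_A, H2.pow_z]
      refine hmk _ ?_
      have hcalc : (⟨((p^(α+σ-γ) : ℕ) : ℤ), 0, 0⟩ : H2) * ⟨0, 0, ((p^σ : ℕ) : ℤ) * 1⟩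
          = ⟨(p:ℤ)^(α+σ-γ), 0, (p:ℤ)^σ⟩ := by
        ext <;> simp
      rw [hcalc]
      exact Subgroup.subset_normalClosure (by simp)
  set θ : PresentedGroup R →* H2 ⧸ NN := PresentedGroup.toGroup hrels with hθ
  have hθa : θ a = ↑H2.A := by
    rw [ha', hθ, PresentedGroup.toGroup.of]; rfl
  have hθb : θ b = ↑H2.B := by
    rw [hb', hθ, PresentedGroup.toGroup.of]; rfl
  -- α ≤ β
  have hle1 : α ≤ β := by
    have h1 : θ (a ^ p ^ β) = 1 := by rw [haβ, map_one]
    rw [map_pow, hθa, ← QuotientGroup.mk_pow, H2.pow_A, hcastA] at h1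
    have h2 : (⟨(p:ℤ)^β, 0, 0⟩ : H2) ∈ NN := (QuotientGroup.eq_one_iff _).1 h1
    rw [hNN, NH2_eq_SN hβγ hασ hσγ'] at h2
    exact dvd_of_A_mem hβγ hασ hσγ' hp.one_lt β h2
  have hle2 : β ≤ α := by
    have h1 : θ (b ^ p ^ α) = 1 := by rw [hbα, map_one]
    rw [map_pow, hθb, ← QuotientGroup.mk_pow, H2.pow_B', hcastB] at h1
    have h2 : (⟨0, (p:ℤ)^α, 0⟩ : H2) ∈ NN := (QuotientGroup.eq_one_iff _).1 h1
    rw [hNN, NH2_eq_SN hβγ hασ hσγ'] at h2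
    exact dvd_of_B_mem hβγ hασ hσγ' hp.one_lt α h2
  omega

end ForwardMain

/-! ### The free class-3 nilpotent group of rank 2, as `ℤ⁵` with Hall polynomials -/

@[ext] structure F3 where
  i : ℤ
  j : ℤ
  l : ℤ
  m : ℤ
  n : ℤ

namespace F3

@[simp] lemma i_mk (a b c d e : ℤ) : (F3.mk a b c d e).i = a := rfl
@[simp] lemma j_mk (a b c d e : ℤ) : (F3.mk a b c d e).j = b := rfl
@[simp] lemma l_mk (a b c d e : ℤ) : (F3.mk a b c d e).l = c := rfl
@[simp] lemma m_mk (a b c d e : ℤ) : (F3.mk a b c d e).m = d := rfl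
@[simp] lemma n_mk (a b c d e : ℤ) : (F3.mk a b c d e).n = e := rfl

instance : Mul F3 := ⟨fun g h =>
  ⟨g.i + h.i, g.j + h.j, g.l + h.l + g.j * h.i,
   g.m + h.m + g.l * h.i + g.j * bin h.i,
   g.n + h.n + g.l * h.j + h.i * g.j * h.j + h.i * bin g.j⟩⟩
instance : One F3 := ⟨⟨0,0,0,0,0⟩⟩
instance : Inv F3 := ⟨fun g =>
  ⟨-g.i, -g.j, g.i * g.j - g.l,
   -(g.m + g.l * (-g.i) + g.j * bin (-g.i)),
   -(g.n + g.l * (-g.j) + (-g.i) * g.j * (-g.j) + (-g.i) * bin g.j)⟩⟩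

@[simp] lemma mul_def (g h : F3) : g * h =
  ⟨g.i + h.i, g.j + h.j, g.l + h.l + g.j * h.i,
   g.m + h.m + g.l * h.i + g.j * bin h.i,
   g.n + h.n + g.l * h.j + h.i * g.j * h.j + h.i * bin g.j⟩ := rfl
@[simp] lemma one_def : (1 : F3) = ⟨0,0,0,0,0⟩ := rfl
@[simp] lemma inv_def (g : F3) : g⁻¹ =
  ⟨-g.i, -g.j, g.i * g.j - g.l,
   -(g.m + g.l * (-g.i) + g.j * bin (-g.i)),
   -(g.n + g.l * (-g.j) + (-g.i) * g.j * (-g.j) + (-g.i) * bin g.j)⟩ := rfl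

instance : Group F3 where
  mul_assoc a b c := by
    ext <;> simp [bin_add, bin_neg] <;> ring
  one_mul a := by ext <;> simp
  mul_one a := by ext <;> simp
  inv_mul_cancel a := by
    refine F3.ext ?_ ?_ ?_ ?_ ?_ <;> simp [bin_add, bin_neg]
    · ring
    · linear_combination (-a.j) * two_bin a.i
    · linear_combination a.i * two_bin a.j

def X : F3 := ⟨1,0,0,0,0⟩
def Y : F3 := ⟨0,1,0,0,0⟩

lemma zpow_X : ∀ k : ℤ, (X : F3) ^ k = ⟨k,0,0,0,0⟩ := by
  intro k
  induction k using Int.induction_on with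
  | zero => ext <;> simp
  | succ n ih => rw [zpow_add_one, ih]; ext <;> simp [X] <;> ring
  | pred n ih => rw [zpow_sub_one, ih]; ext <;> simp [X] <;> ring

lemma zpow_Y : ∀ k : ℤ, (Y : F3) ^ k = ⟨0,k,0,0,0⟩ := by
  intro k
  induction k using Int.induction_on with
  | zero => ext <;> simp
  | succ n ih => rw [zpow_add_one, ih]; ext <;> simp [Y, bin_add, bin_neg] <;> ring
  | pred n ih => rw [zpow_sub_one, ih]; ext <;> simp [Y, bin_add, bin_neg] <;> ring

lemma zpow_cde (l m n : ℤ) : ∀ k : ℤ, (⟨0,0,l,m,n⟩ : F3) ^ k = ⟨0,0,k*l,k*m,k*n⟩ := by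
  intro k
  induction k using Int.induction_on with
  | zero => ext <;> simp
  | succ q ih => rw [zpow_add_one, ih]; ext <;> simp <;> ring
  | pred q ih => rw [zpow_sub_one, ih]; ext <;> simp <;> ring

lemma pcomm_X (g : F3) : pcomm g X = ⟨0,0,g.j,g.l,bin g.j⟩ := by
  refine F3.ext ?_ ?_ ?_ ?_ ?_ <;> simp [pcomm, X, bin_add, bin_neg]
  · ring
  · linear_combination (-g.j) * two_bin g.i
  · linear_combination (g.i - 1) * two_bin g.j

lemma pcomm_Y (g : F3) : pcomm g Y = ⟨0,0,-g.i,-bin g.i, g.l - g.i * g.j⟩ := by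
  refine F3.ext ?_ ?_ ?_ ?_ ?_ <;> simp [pcomm, Y, bin_add, bin_neg]
  · ring
  · linear_combination (-g.j) * two_bin g.i
  · linear_combination g.i * two_bin g.j

lemma decomp (g : F3) : g = X ^ g.i * Y ^ g.j * (⟨0,0,1,0,0⟩ : F3) ^ g.l
    * (⟨0,0,0,1,0⟩ : F3) ^ g.m * (⟨0,0,0,0,1⟩ : F3) ^ g.n := by
  rw [zpow_X, zpow_Y, zpow_cde, zpow_cde, zpow_cde]
  ext <;> simp

lemma C_eq : (⟨0,0,1,0,0⟩ : F3) = pcomm Y X := by rw [pcomm_X]; ext <;> simp [Y]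
lemma D_eq : (⟨0,0,0,1,0⟩ : F3) = pcomm (pcomm Y X) X := by
  rw [← C_eq, pcomm_X]; ext <;> simp
lemma E_eq : (⟨0,0,0,0,1⟩ : F3) = pcomm (pcomm Y X) Y := by
  rw [← C_eq, pcomm_Y]; ext <;> simp

lemma closure_XY : Subgroup.closure ({X, Y} : Set F3) = ⊤ := by
  rw [eq_top_iff]
  intro g _
  set S := Subgroup.closure ({X, Y} : Set F3)
  have hX : (X : F3) ∈ S := Subgroup.subset_closure (by simp)
  have hY : (Y : F3) ∈ S := Subgroup.subset_closure (by simp)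
  have hC : (⟨0,0,1,0,0⟩ : F3) ∈ S := by
    rw [C_eq]
    exact Subgroup.mul_mem _ (Subgroup.mul_mem _ (Subgroup.mul_mem _
      (Subgroup.inv_mem _ hY) (Subgroup.inv_mem _ hX)) hY) hX
  have hD : (⟨0,0,0,1,0⟩ : F3) ∈ S := by
    rw [D_eq, ← C_eq]
    exact Subgroup.mul_mem _ (Subgroup.mul_mem _ (Subgroup.mul_mem _
      (Subgroup.inv_mem _ hC) (Subgroup.inv_mem _ hX)) hC) hX
  have hE : (⟨0,0,0,0,1⟩ : F3) ∈ S := by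
    rw [E_eq, ← C_eq]
    exact Subgroup.mul_mem _ (Subgroup.mul_mem _ (Subgroup.mul_mem _
      (Subgroup.inv_mem _ hC) (Subgroup.inv_mem _ hY)) hC) hY
  rw [decomp g]
  exact Subgroup.mul_mem _ (Subgroup.mul_mem _ (Subgroup.mul_mem _ (Subgroup.mul_mem _
    (Subgroup.zpow_mem _ hX _) (Subgroup.zpow_mem _ hY _)) (Subgroup.zpow_mem _ hC _))
    (Subgroup.zpow_mem _ hD _)) (Subgroup.zpow_mem _ hE _)

/-- the projection onto the class-two quotient -/
def projF : F3 →* H2 where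
  toFun g := ⟨g.i, g.j, g.l⟩
  map_one' := by ext <;> simp
  map_mul' g h := by ext <;> simp

@[simp] lemma projF_apply (g : F3) : projF g = ⟨g.i, g.j, g.l⟩ := rfl

lemma projF_surjective : Function.Surjective projF := by
  intro h; exact ⟨⟨h.x, h.y, h.z, 0, 0⟩, by ext <;> simp⟩

lemma conj_cde (g : F3) (l m n : ℤ) :
    g⁻¹ * (⟨0,0,l,m,n⟩ : F3) * g = ⟨0,0,l, m + l*g.i, n + l*g.j⟩ := by
  refine F3.ext ?_ ?_ ?_ ?_ ?_ <;> simp [bin_add, bin_neg]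
  · ring
  · linear_combination (-g.j) * two_bin g.i
  · linear_combination g.i * two_bin g.j

end F3

/-! ### Exchange lemma for class-two relations -/

section Exchange

variable {H : Type*} [Group H]

lemma conj_zpow_eq₂ (u x : H) (hc : Commute (pcomm u x) u) (k : ℤ) :
    x⁻¹ * u ^ k * x = u ^ k * (pcomm u x) ^ k := by
  have h1 : x⁻¹ * u ^ k * x = (x⁻¹ * u * x) ^ k := by
    have h2 : ∀ g : H, x⁻¹ * g * x = (MulAut.conj x⁻¹) g := by
      intro g; simp [MulAut.conj]
    rw [h2, h2, ← map_zpow]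
  rw [h1, conj_pcomm]
  exact hc.symm.mul_zpow k

lemma zexchange (a b : H)
    (hca : Commute (pcomm b a) a) (hcb : Commute (pcomm b a) b) (j : ℤ) :
    ∀ i : ℤ, b ^ j * a ^ i = a ^ i * b ^ j * (pcomm b a) ^ (j * i) := by
  set c := pcomm b a with hc
  have hcc : ∀ t : ℤ, a⁻¹ * c ^ t * a = c ^ t := by
    intro t
    have h := (hca.zpow_left t).eq
    calc a⁻¹ * c ^ t * a = a⁻¹ * (c ^ t * a) := by group
      _ = a⁻¹ * (a * c ^ t) := by rw [h]
      _ = c ^ t := by group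
  have hccinv : ∀ t : ℤ, a * c ^ t * a⁻¹ = c ^ t := by
    intro t
    have h := (hca.zpow_left t).eq
    calc a * c ^ t * a⁻¹ = a * (c ^ t * a⁻¹) := by group
      _ = a * (a⁻¹ * c ^ t) := by rw [(hca.zpow_left t).inv_right.eq]
      _ = c ^ t := by group
  have hstep : a⁻¹ * b ^ j * a = b ^ j * c ^ j := conj_zpow_eq₂ b a hcb j
  have hstep' : a * b ^ j * a⁻¹ = b ^ j * c ^ (-j) := by
    have h2 : (a * b ^ j * a⁻¹) * c ^ j = b ^ j := by
      calc (a * b ^ j * a⁻¹) * c ^ j = a * (b ^ j * (a⁻¹ * c ^ j * a)) * a⁻¹ := by group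
        _ = a * (b ^ j * c ^ j) * a⁻¹ := by rw [hcc]
        _ = a * (a⁻¹ * b ^ j * a) * a⁻¹ := by rw [hstep]
        _ = b ^ j := by group
    calc a * b ^ j * a⁻¹ = ((a * b ^ j * a⁻¹) * c ^ j) * c ^ (-j) := by group
      _ = b ^ j * c ^ (-j) := by rw [h2]
  have hconj : ∀ i : ℤ, a ^ (-i) * b ^ j * a ^ i = b ^ j * c ^ (j * i) := by
    intro i
    induction i using Int.induction_on with
    | zero => simp
    | succ n ih =>
      have e1 : a ^ (-(n + 1) : ℤ) = a⁻¹ * a ^ (-n : ℤ) := by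
        rw [show (-(n + 1) : ℤ) = -1 + -n by ring, zpow_add, zpow_neg_one]
      have e2 : a ^ ((n : ℤ) + 1) = a ^ (n : ℤ) * a := zpow_add_one a n
      rw [e1, e2]
      calc a⁻¹ * a ^ (-n : ℤ) * b ^ j * (a ^ (n:ℤ) * a)
          = a⁻¹ * (a ^ (-n:ℤ) * b ^ j * a ^ (n:ℤ)) * a := by group
        _ = a⁻¹ * (b ^ j * c ^ (j * n)) * a := by rw [ih]
        _ = (a⁻¹ * b ^ j * a) * (a⁻¹ * c ^ (j * n) * a) := by group
        _ = (b ^ j * c ^ j) * c ^ (j * n) := by rw [hstep, hcc]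
        _ = b ^ j * c ^ (j * ((n:ℤ) + 1)) := by
            rw [mul_assoc, ← zpow_add, show j + j * n = j * ((n:ℤ)+1) by ring]
    | pred n ih =>
      have e1 : a ^ (-(-(n:ℤ) - 1)) = a * a ^ (n : ℤ) := by
        rw [show (-(-(n:ℤ) - 1)) = 1 + (n:ℤ) by ring, zpow_add, zpow_one]
      have e2 : a ^ (-(n:ℤ) - 1) = a ^ (-(n:ℤ)) * a⁻¹ := by
        rw [show (-(n:ℤ) - 1) = -(n:ℤ) + -1 by ring, zpow_add, zpow_neg_one]
      have ihn : a ^ (n:ℤ) * b ^ j * a ^ (-(n:ℤ)) = b ^ j * c ^ (j * (-(n:ℤ))) := by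
        simpa using ih
      rw [e1, e2]
      calc a * a ^ (n:ℤ) * b ^ j * (a ^ (-(n:ℤ)) * a⁻¹)
          = a * (a ^ (n:ℤ) * b ^ j * a ^ (-(n:ℤ))) * a⁻¹ := by group
        _ = a * (b ^ j * c ^ (j * (-(n:ℤ)))) * a⁻¹ := by rw [ihn]
        _ = (a * b ^ j * a⁻¹) * (a * c ^ (j * (-(n:ℤ))) * a⁻¹) := by group
        _ = (b ^ j * c ^ (-j)) * c ^ (j * (-(n:ℤ))) := by rw [hstep', hccinv]
        _ = b ^ j * c ^ (j * (-(n:ℤ) - 1)) := by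
            rw [mul_assoc, ← zpow_add, show -j + j * (-(n:ℤ)) = j * (-(n:ℤ) - 1) by ring]
  intro i
  have h := hconj i
  calc b ^ j * a ^ i = a ^ i * (a ^ (-i) * b ^ j * a ^ i) := by group
    _ = a ^ i * (b ^ j * c ^ (j * i)) := by rw [h]
    _ = a ^ i * b ^ j * c ^ (j * i) := by rw [mul_assoc]

end Exchange

section RSsec

variable (p α γ σ : ℕ)

/-- the relator subgroup of `F3` -/
def RS : Subgroup F3 where
  carrier := {g | g.i = 0 ∧ g.j = 0 ∧ ∃ k : ℤ, g.l = (p:ℤ)^(α+σ-γ) * k ∧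
      ((p:ℤ)^σ ∣ g.m) ∧ ((p:ℤ)^γ ∣ g.n + k * (p:ℤ)^σ)}
  one_mem' := ⟨rfl, rfl, 0, by simp, by simp, by simp⟩
  mul_mem' := by
    rintro a b ⟨hai, haj, k, hal, ham, han⟩ ⟨hbi, hbj, k', hbl, hbm, hbn⟩
    refine ⟨by simp [hai, hbi], by simp [haj, hbj], k + k', ?_, ?_, ?_⟩
    · simp [hal, hbl, haj, hbi]; ring
    · have h : (a * b).m = a.m + b.m := by simp [hbi, haj]
      rw [h]; exact dvd_add ham hbm
    · have h : (a * b).n = a.n + b.n := by simp [hbi, haj, hbj]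
      rw [h]
      have h2 := dvd_add han hbn
      convert h2 using 1; rfl; ring
  inv_mem' := by
    rintro a ⟨hai, haj, k, hal, ham, han⟩
    refine ⟨by simp [hai], by simp [haj], -k, ?_, ?_, ?_⟩
    · simp [hai, haj, hal]; try ring
    · have h : (a⁻¹).m = -a.m := by simp [hai, haj]
      rw [h]; exact ham.neg_right
    · have h : (a⁻¹).n = -a.n := by simp [hai, haj]
      rw [h]
      have h2 := (dvd_neg (α := ℤ)).2 han
      convert h2 using 1; rfl; ring

variable {p α γ σ}

lemma RS_normal (hαγ : γ ≤ α) (hασ : 2*γ ≤ α+σ) : (RS p α γ σ).Normal := by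
  constructor
  rintro a ⟨hai, haj, k, hal, ham, han⟩ g
  have ha : a = ⟨0, 0, a.l, a.m, a.n⟩ := by ext <;> simp [hai, haj]
  have hconj : g * a * g⁻¹ = ⟨0, 0, a.l, a.m + a.l * (g⁻¹).i, a.n + a.l * (g⁻¹).j⟩ := by
    have := F3.conj_cde g⁻¹ a.l a.m a.n
    rw [inv_inv] at this
    rw [ha]; exact this
  rw [hconj]
  have hσm : ((p:ℤ)^σ) ∣ ((p:ℤ)^(α+σ-γ)) := pow_dvd_pow _ (by omega)
  have hγm : ((p:ℤ)^γ) ∣ ((p:ℤ)^(α+σ-γ)) := pow_dvd_pow _ (by omega)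
  refine ⟨rfl, rfl, k, by simpa using hal, ?_, ?_⟩
  · simp only [F3.m_mk]
    exact dvd_add ham (by rw [hal]; exact Dvd.dvd.mul_right (hσm.mul_right k) _)
  · simp only [F3.n_mk]
    have : a.n + a.l * (g⁻¹).j + k * (p:ℤ)^σ
        = (a.n + k * (p:ℤ)^σ) + a.l * (g⁻¹).j := by ring
    rw [this]
    exact dvd_add han (by rw [hal]; exact Dvd.dvd.mul_right (hγm.mul_right k) _)

end RSsec

/-- the relator checks for the map to `H2 ⧸ NH2` -/
lemma lift_rels (p α β γ σ : ℕ) :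
    ∀ r ∈ twoGenRels p α β γ σ,
      FreeGroup.lift (![↑H2.A, ↑H2.B] : Fin 2 → H2 ⧸ NH2 p α β γ σ) r = 1 := by
  set NN := NH2 p α β γ σ with hNN
  set f : Fin 2 → H2 ⧸ NN := ![↑H2.A, ↑H2.B] with hf
  have hmk : ∀ g : H2, g ∈ NN → ((g : H2 ⧸ NN) = 1) := fun g hg =>
    (QuotientGroup.eq_one_iff g).2 hg
  have hcastA : ∀ e : ℕ, (⟨((p^e : ℕ) : ℤ), 0, 0⟩ : H2) = ⟨(p:ℤ)^e, 0, 0⟩ := by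
    intro e; ext <;> simp
  have hcastB : ∀ e : ℕ, (⟨0, ((p^e : ℕ) : ℤ), 0⟩ : H2) = ⟨0, (p:ℤ)^e, 0⟩ := by
    intro e; ext <;> simp
  intro r hr
  simp only [twoGenRels, Set.mem_insert_iff, Set.mem_singleton_iff] at hr
  have hf0 : f 0 = ↑H2.A := rfl
  have hf1 : f 1 = ↑H2.B := rfl
  rcases hr with rfl | rfl | rfl | rfl | rfl | rfl
  · rw [map_pow, FreeGroup.lift_apply_of, hf0, ← QuotientGroup.mk_pow, H2.pow_A, hcastA]
    exact hmk _ (Subgroup.subset_normalClosure (by simp))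
  · rw [map_pow, FreeGroup.lift_apply_of, hf1, ← QuotientGroup.mk_pow, H2.pow_B', hcastB]
    exact hmk _ (Subgroup.subset_normalClosure (by simp))
  · rw [map_pow, map_pcomm', FreeGroup.lift_apply_of, FreeGroup.lift_apply_of, hf0, hf1,
      pcomm_mk, H2.pcomm_BA, ← QuotientGroup.mk_pow, H2.pow_z]
    refine hmk _ ?_
    have : ((p ^ γ : ℕ) : ℤ) * 1 = (p:ℤ)^γ := by push_cast; ring
    rw [this]
    exact Subgroup.subset_normalClosure (by simp)
  · rw [map_pcomm', map_pcomm', FreeGroup.lift_apply_of, FreeGroup.lift_apply_of, hf0, hf1,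
      pcomm_mk, H2.pcomm_AB, pcomm_mk, H2.pcomm_z_left]
    rfl
  · rw [map_pcomm', map_pcomm', FreeGroup.lift_apply_of, FreeGroup.lift_apply_of, hf0, hf1,
      pcomm_mk, H2.pcomm_AB, pcomm_mk, H2.pcomm_z_left]
    rfl
  · rw [map_mul, map_pow, map_pow, map_pcomm', FreeGroup.lift_apply_of, FreeGroup.lift_apply_of,
      hf0, hf1, pcomm_mk, H2.pcomm_BA, ← QuotientGroup.mk_pow, ← QuotientGroup.mk_pow,
      ← QuotientGroup.mk_mul, H2.pow_A, H2.pow_z]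
    refine hmk _ ?_
    have hcalc : (⟨((p^(α+σ-γ) : ℕ) : ℤ), 0, 0⟩ : H2) * ⟨0, 0, ((p^σ : ℕ) : ℤ) * 1⟩
        = ⟨(p:ℤ)^(α+σ-γ), 0, (p:ℤ)^σ⟩ := by
      ext <;> simp
    rw [hcalc]
    exact Subgroup.subset_normalClosure (by simp)

section BackwardMain

variable {p α γ σ : ℕ}

lemma backward_dir (hp : p.Prime) (hodd : Odd p)
    (hγ : 1 ≤ γ) (hαγ : γ ≤ α) (hασ : 2 * γ ≤ α + σ) (hσγ : σ < γ) :
    IsCapable (PresentedGroup (twoGenRels p α α γ σ)) := by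
  classical
  have hσγ' : σ ≤ γ := hσγ.le
  set m0 := α + σ - γ with hm0
  set P : ℤ := (p : ℤ) with hP
  have hPodd : Odd P := by rw [hP]; exact (Int.odd_coe_nat p).2 hodd
  have hoddm0 : Odd (P ^ m0) := hPodd.pow
  have hoddα : Odd (P ^ α) := hPodd.pow
  have hp0 : (0:ℤ) < P := by rw [hP]; exact_mod_cast hp.pos
  have hPσ0 : P ^ σ ≠ 0 := by positivity
  have hsplitα : P ^ m0 * P ^ (γ - σ) = P ^ α := by
    rw [← pow_add]; congr 1; omega
  have hsplitγ : P ^ (γ - σ) * P ^ σ = P ^ γ := by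
    rw [← pow_add]; congr 1; omega
  have hγm0 : P ^ γ ∣ P ^ m0 := pow_dvd_pow _ (by omega)
  have hσm0 : P ^ σ ∣ P ^ m0 := pow_dvd_pow _ (by omega)
  have hσγd : P ^ σ ∣ P ^ γ := pow_dvd_pow _ hσγ'
  have hγα : P ^ γ ∣ P ^ α := pow_dvd_pow _ hαγ
  letI instRS : (RS p α γ σ).Normal := RS_normal hαγ hασ
  set RSg := RS p α γ σ with hRSg
  set NN := NH2 p α α γ σ with hNN
  set φq : F3 →* H2 ⧸ NN := (QuotientGroup.mk' NN).comp F3.projF with hφq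
  have hφqsurj : Function.Surjective φq := by
    intro q
    obtain ⟨h, rfl⟩ := QuotientGroup.mk'_surjective NN q
    obtain ⟨g, rfl⟩ := F3.projF_surjective h
    exact ⟨g, rfl⟩
  set MZ := φq.ker with hMZ
  have hSN : NN = SN p α α γ σ hαγ hασ hσγ' := NH2_eq_SN hαγ hασ hσγ'
  have hmemMZ : ∀ g : F3, g ∈ MZ ↔
      ((∃ k, g.i = P ^ m0 * k ∧ P ^ γ ∣ (g.l - k * P ^ σ)) ∧ P ^ α ∣ g.j) := by
    intro g
    have h0 : g ∈ MZ ↔ F3.projF g ∈ NN := by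
      rw [hMZ, MonoidHom.mem_ker, hφq, MonoidHom.comp_apply]
      exact QuotientGroup.eq_one_iff _
    rw [h0, hSN]
    exact Iff.rfl
  have hRSle : RSg ≤ MZ := by
    rintro g ⟨hgi, hgj, k, hgl, -, -⟩
    rw [hmemMZ]
    refine ⟨⟨0, by rw [hgi]; ring, ?_⟩, by rw [hgj]; exact dvd_zero _⟩
    have : g.l - 0 * P ^ σ = P ^ m0 * k := by rw [hgl]; ring
    rw [this]
    exact hγm0.mul_right k
  -- generation of the quotient
  have hgenQ : Subgroup.closure ({((F3.X : F3) : F3 ⧸ RSg), ((F3.Y : F3) : F3 ⧸ RSg)} :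
      Set (F3 ⧸ RSg)) = ⊤ := by
    have h1 : Subgroup.map (QuotientGroup.mk' RSg) (Subgroup.closure {F3.X, F3.Y})
        = Subgroup.closure ({((F3.X : F3) : F3 ⧸ RSg), ((F3.Y : F3) : F3 ⧸ RSg)}) := by
      rw [MonoidHom.map_closure]
      congr 1
      exact Set.image_pair _ _ _
    rw [← h1, F3.closure_XY]
    exact Subgroup.map_top_of_surjective _ (QuotientGroup.mk'_surjective RSg)
  have hcommiff : ∀ g h : F3,
      Commute ((g : F3) : F3 ⧸ RSg) ((h : F3) : F3 ⧸ RSg) ↔ pcomm g h ∈ RSg := by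
    intro g h
    constructor
    · intro hc
      have h1 : pcomm ((g : F3) : F3 ⧸ RSg) ((h : F3) : F3 ⧸ RSg) = 1 :=
        pcomm_eq_one_iff.2 hc.eq
      rw [pcomm_mk] at h1
      exact (QuotientGroup.eq_one_iff _).1 h1
    · intro hm
      have h1 : pcomm ((g : F3) : F3 ⧸ RSg) ((h : F3) : F3 ⧸ RSg) = 1 := by
        rw [pcomm_mk]
        exact (QuotientGroup.eq_one_iff _).2 hm
      exact pcomm_eq_one_iff.1 h1
  -- the center of F3 ⧸ RS
  have hcenter : Subgroup.center (F3 ⧸ RSg) = Subgroup.map (QuotientGroup.mk' RSg) MZ := by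
    apply le_antisymm
    · intro z hz
      obtain ⟨g, rfl⟩ := QuotientGroup.mk'_surjective RSg z
      refine ⟨g, ?_, rfl⟩
      have hgX : pcomm g F3.X ∈ RSg := (hcommiff g F3.X).1
        (Subgroup.mem_center_iff.1 hz _).symm
      have hgY : pcomm g F3.Y ∈ RSg := (hcommiff g F3.Y).1
        (Subgroup.mem_center_iff.1 hz _).symm
      rw [F3.pcomm_X] at hgX
      rw [F3.pcomm_Y] at hgY
      obtain ⟨-, -, k2, hk2, hσl, hbin2⟩ := hgX
      obtain ⟨-, -, k3, hk3, hσbin, hn3⟩ := hgY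
      simp only [F3.l_mk, F3.m_mk, F3.n_mk] at hk2 hσl hbin2 hk3 hσbin hn3
      -- p^α ∣ g.j
      have hjm0 : P ^ m0 ∣ g.j := ⟨k2, hk2⟩
      have hbinj : P ^ γ ∣ bin g.j := hγm0.trans (dvd_bin hoddm0 hjm0)
      have hkP : P ^ γ ∣ k2 * P ^ σ := by
        have h2 : k2 * P ^ σ = (bin g.j + k2 * P ^ σ) - bin g.j := by ring
        rw [h2]
        exact dvd_sub hbin2 hbinj
      have hk2' : P ^ (γ - σ) ∣ k2 := by
        obtain ⟨cc, hcc⟩ := hkP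
        refine ⟨cc, ?_⟩
        apply mul_right_cancel₀ hPσ0
        rw [hcc, ← hsplitγ]; ring
      obtain ⟨cc, hcc⟩ := hk2'
      have hjα : P ^ α ∣ g.j := ⟨cc, by rw [hk2, hcc, ← hsplitα]; ring⟩
      have him0 : P ^ m0 ∣ g.i := ⟨-k3, by linear_combination -hk3⟩
      refine (hmemMZ g).2 ⟨⟨-k3, by linear_combination -hk3, ?_⟩, hjα⟩
      have hij : P ^ γ ∣ g.i * g.j := (hγm0.trans him0).mul_right g.j
      have h3 := dvd_add hn3 hij
      convert h3 using 1; rfl; ring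
    · rintro z ⟨g, hg, rfl⟩
      obtain ⟨⟨k, hik, hlk⟩, ⟨cc, hjc⟩⟩ := (hmemMZ g).1 hg
      apply mem_center_of_commute₂ hgenQ
      · apply (hcommiff g F3.X).2
        rw [F3.pcomm_X]
        refine ⟨rfl, rfl, P ^ (γ - σ) * cc, ?_, ?_, ?_⟩
        · simp only [F3.l_mk]
          rw [hjc, ← hsplitα]; ring
        · simp only [F3.m_mk]
          have h1 : P ^ σ ∣ g.l - k * P ^ σ := hσγd.trans hlk
          have h2 : P ^ σ ∣ k * P ^ σ := dvd_mul_left _ _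
          have h3 := dvd_add h1 h2
          convert h3 using 1; rfl; ring
        · simp only [F3.n_mk]
          have h1 : P ^ γ ∣ bin g.j := hγα.trans (dvd_bin hoddα ⟨cc, hjc⟩)
          have h2 : P ^ γ ∣ P ^ (γ - σ) * cc * P ^ σ := ⟨cc, by rw [← hsplitγ]; ring⟩
          exact dvd_add h1 h2
      · apply (hcommiff g F3.Y).2
        rw [F3.pcomm_Y]
        refine ⟨rfl, rfl, -k, ?_, ?_, ?_⟩
        · simp only [F3.l_mk]
          rw [hik]; ring
        · simp only [F3.m_mk]
          exact (hσm0.trans (dvd_bin hoddm0 ⟨k, hik⟩)).neg_right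
        · simp only [F3.n_mk]
          have hij : P ^ γ ∣ g.i * g.j := (hγm0.trans ⟨k, hik⟩).mul_right g.j
          have h3 := dvd_sub hlk hij
          convert h3 using 1; rfl; ring
  -- the presented group and its relations
  set a : PresentedGroup (twoGenRels p α α γ σ) := PresentedGroup.of 0 with ha0
  set b : PresentedGroup (twoGenRels p α α γ σ) := PresentedGroup.of 1 with hb0
  have hrel : ∀ r ∈ twoGenRels p α α γ σ,
      (PresentedGroup.mk (twoGenRels p α α γ σ) r) = 1 := fun r hr =>
    (QuotientGroup.eq_one_iff r).2 (Subgroup.subset_normalClosure hr)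
  have hra : a ^ p ^ α = 1 := by
    have := hrel _ (show (FreeGroup.of 0 : FreeGroup (Fin 2)) ^ p ^ α ∈ _ by
      simp [twoGenRels])
    rwa [map_pow] at this
  have hrb : b ^ p ^ α = 1 := by
    have := hrel _ (show (FreeGroup.of 1 : FreeGroup (Fin 2)) ^ p ^ α ∈ _ by
      simp [twoGenRels])
    rwa [map_pow] at this
  have hrc : (pcomm b a) ^ p ^ γ = 1 := by
    have := hrel _ (show (pcomm (FreeGroup.of 1) (FreeGroup.of 0) :
        FreeGroup (Fin 2)) ^ p ^ γ ∈ _ by simp [twoGenRels])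
    rwa [map_pow, map_pcomm'] at this
  have hr4 : pcomm (pcomm a b) a = 1 := by
    have := hrel _ (show (pcomm (pcomm (FreeGroup.of 0) (FreeGroup.of 1))
        (FreeGroup.of 0) : FreeGroup (Fin 2)) ∈ _ by simp [twoGenRels])
    rwa [map_pcomm', map_pcomm'] at this
  have hr5 : pcomm (pcomm a b) b = 1 := by
    have := hrel _ (show (pcomm (pcomm (FreeGroup.of 0) (FreeGroup.of 1))
        (FreeGroup.of 1) : FreeGroup (Fin 2)) ∈ _ by simp [twoGenRels])
    rwa [map_pcomm', map_pcomm'] at this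
  have hr6 : a ^ p ^ m0 * (pcomm b a) ^ p ^ σ = 1 := by
    have := hrel _ (show (FreeGroup.of 0 : FreeGroup (Fin 2)) ^ p ^ (α + σ - γ) *
        pcomm (FreeGroup.of 1) (FreeGroup.of 0) ^ p ^ σ ∈ _ by simp [twoGenRels])
    rwa [map_mul, map_pow, map_pow, map_pcomm'] at this
  have hca : Commute (pcomm b a) a := by
    rw [pcomm_swap]
    have h1 : Commute (pcomm a b) a := pcomm_eq_one_iff.1 hr4
    exact h1.inv_left
  have hcb : Commute (pcomm b a) b := by
    rw [pcomm_swap]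
    have h1 : Commute (pcomm a b) b := pcomm_eq_one_iff.1 hr5
    exact h1.inv_left
  -- the homomorphism ψ : H2 → PresentedGroup
  have hψmul : ∀ g h : H2,
      (fun g : H2 => a ^ g.x * (pcomm b a) ^ g.z * b ^ g.y) (g * h)
      = (fun g : H2 => a ^ g.x * (pcomm b a) ^ g.z * b ^ g.y) g
        * (fun g : H2 => a ^ g.x * (pcomm b a) ^ g.z * b ^ g.y) h := by
    intro g h
    simp only [H2.mul_def, H2.x_mk, H2.y_mk, H2.z_mk]
    have hex := zexchange a b hca hcb g.y h.x
    have hswap_ca : ∀ s t : ℤ, (pcomm b a) ^ s * a ^ t = a ^ t * (pcomm b a) ^ s :=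
      fun s t => (hca.zpow_zpow s t).eq
    have hswap_cb : ∀ s t : ℤ, b ^ t * (pcomm b a) ^ s = (pcomm b a) ^ s * b ^ t :=
      fun s t => ((hcb.zpow_zpow s t).eq).symm
    symm
    calc (a ^ g.x * (pcomm b a) ^ g.z * b ^ g.y) * (a ^ h.x * (pcomm b a) ^ h.z * b ^ h.y)
        = a ^ g.x * (pcomm b a) ^ g.z * (b ^ g.y * a ^ h.x) * (pcomm b a) ^ h.z * b ^ h.y := by
          group
      _ = a ^ g.x * (pcomm b a) ^ g.z * (a ^ h.x * b ^ g.y * (pcomm b a) ^ (g.y * h.x))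
            * (pcomm b a) ^ h.z * b ^ h.y := by rw [hex]
      _ = a ^ g.x * ((pcomm b a) ^ g.z * a ^ h.x)
            * (b ^ g.y * (pcomm b a) ^ (g.y * h.x + h.z)) * b ^ h.y := by group
      _ = a ^ g.x * (a ^ h.x * (pcomm b a) ^ g.z)
            * ((pcomm b a) ^ (g.y * h.x + h.z) * b ^ g.y) * b ^ h.y := by
          rw [hswap_ca g.z h.x, hswap_cb (g.y * h.x + h.z) g.y]
      _ = a ^ (g.x + h.x) * (pcomm b a) ^ (g.z + (g.y * h.x + h.z)) * b ^ (g.y + h.y) := by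
          group
      _ = a ^ (g.x + h.x) * (pcomm b a) ^ (g.z + h.z + g.y * h.x) * b ^ (g.y + h.y) := by
          rw [show g.z + (g.y * h.x + h.z) = g.z + h.z + g.y * h.x by ring]
  set ψ : H2 →* PresentedGroup (twoGenRels p α α γ σ) :=
    MonoidHom.mk' (fun g : H2 => a ^ g.x * (pcomm b a) ^ g.z * b ^ g.y) hψmul with hψ
  have hψapp : ∀ g : H2, ψ g = a ^ g.x * (pcomm b a) ^ g.z * b ^ g.y := fun g => rfl
  have hnatpow : ∀ (w : PresentedGroup (twoGenRels p α α γ σ)) (e : ℕ),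
      w ^ ((p:ℤ)^e) = w ^ (p^e : ℕ) := by
    intro w e
    rw [← zpow_natCast]
    norm_cast
  have hNNker : NN ≤ ψ.ker := by
    rw [hNN]
    apply Subgroup.normalClosure_le_normal
    intro g hg
    simp only [Set.mem_insert_iff, Set.mem_singleton_iff] at hg
    rw [SetLike.mem_coe, MonoidHom.mem_ker]
    rcases hg with rfl | rfl | rfl | rfl
    · rw [hψapp]
      simp only [H2.x_mk, H2.y_mk, H2.z_mk, zpow_zero, mul_one, one_mul]
      rw [hnatpow, hra]
    · rw [hψapp]
      simp only [H2.x_mk, H2.y_mk, H2.z_mk, zpow_zero, mul_one, one_mul]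
      rw [hnatpow, hrb]
    · rw [hψapp]
      simp only [H2.x_mk, H2.y_mk, H2.z_mk, zpow_zero, mul_one, one_mul]
      rw [hnatpow, hrc]
    · rw [hψapp]
      simp only [H2.x_mk, H2.y_mk, H2.z_mk, zpow_zero, mul_one]
      rw [hnatpow, hnatpow, hr6]
  set ψbar : (H2 ⧸ NN) →* PresentedGroup (twoGenRels p α α γ σ) :=
    QuotientGroup.lift NN ψ hNNker with hψbar
  set θ : PresentedGroup (twoGenRels p α α γ σ) →* H2 ⧸ NN :=
    PresentedGroup.toGroup (lift_rels p α α γ σ) with hθ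
  have hθa : θ a = ((H2.A : H2) : H2 ⧸ NN) := by
    rw [ha0, hθ, PresentedGroup.toGroup.of]; rfl
  have hθb : θ b = ((H2.B : H2) : H2 ⧸ NN) := by
    rw [hb0, hθ, PresentedGroup.toGroup.of]; rfl
  have hid1 : θ.comp ψbar = MonoidHom.id (H2 ⧸ NN) := by
    apply QuotientGroup.monoidHom_ext
    apply MonoidHom.ext
    intro h
    simp only [MonoidHom.comp_apply, QuotientGroup.mk'_apply, MonoidHom.id_apply]
    have h1 : ψbar ((h : H2) : H2 ⧸ NN) = ψ h := QuotientGroup.lift_mk' NN hNNker h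
    rw [h1, hψapp]
    rw [map_mul, map_mul, map_zpow, map_zpow, map_zpow, map_pcomm', hθa, hθb]
    rw [pcomm_mk, H2.pcomm_BA, ← QuotientGroup.mk_zpow, ← QuotientGroup.mk_zpow,
      ← QuotientGroup.mk_zpow, ← QuotientGroup.mk_mul, ← QuotientGroup.mk_mul,
      H2.decomp']
  have hid2 : ψbar.comp θ = MonoidHom.id (PresentedGroup (twoGenRels p α α γ σ)) := by
    apply PresentedGroup.ext
    intro x
    fin_cases x
    · simp only [MonoidHom.comp_apply, MonoidHom.id_apply]
      rw [hθ, PresentedGroup.toGroup.of]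
      show ψbar ((H2.A : H2) : H2 ⧸ NN) = PresentedGroup.of 0
      rw [QuotientGroup.lift_mk' NN hNNker, hψapp]
      simp only [H2.A, H2.x_mk, H2.y_mk, H2.z_mk, zpow_one, zpow_zero, mul_one]
      exact ha0
    · simp only [MonoidHom.comp_apply, MonoidHom.id_apply]
      rw [hθ, PresentedGroup.toGroup.of]
      show ψbar ((H2.B : H2) : H2 ⧸ NN) = PresentedGroup.of 1
      rw [QuotientGroup.lift_mk' NN hNNker, hψapp]
      simp only [H2.B, H2.x_mk, H2.y_mk, H2.z_mk, zpow_one, zpow_zero, mul_one, one_mul]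
      exact hb0
  -- assemble the isomorphisms
  letI instMap : (Subgroup.map (QuotientGroup.mk' RSg) MZ).Normal := hcenter ▸ inferInstance
  have e1 : ((F3 ⧸ RSg) ⧸ Subgroup.center (F3 ⧸ RSg)) ≃*
      ((F3 ⧸ RSg) ⧸ Subgroup.map (QuotientGroup.mk' RSg) MZ) :=
    QuotientGroup.quotientMulEquivOfEq hcenter
  have e2 := QuotientGroup.quotientQuotientEquivQuotient RSg MZ hRSle
  have e3 : (F3 ⧸ MZ) ≃* (H2 ⧸ NN) :=
    QuotientGroup.quotientKerEquivOfSurjective φq hφqsurj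
  have e4 : (H2 ⧸ NN) ≃* PresentedGroup (twoGenRels p α α γ σ) :=
    MonoidHom.toMulEquiv ψbar θ hid1 hid2
  exact ⟨F3 ⧸ RSg, inferInstance, ⟨e1.trans (e2.trans (e3.trans e4))⟩⟩

end BackwardMain

end CapAux

/-- For an odd prime `p`, the `2`-generator `p`-group of class two presented by
`a^{p^α} = b^{p^β} = [b,a]^{p^γ} = [a,b,a] = [a,b,b] = a^{p^{α+σ-γ}}[b,a]^{p^σ} = e`
(with `β ≥ γ ≥ 1`, `α ≥ γ`, `α + σ ≥ 2γ`, `0 ≤ σ < γ`) is capable if and only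
if `α = β`. -/
theorem capable_two_generator_class_two
    (p : ℕ) (hp : p.Prime) (hodd : Odd p)
    (α β γ σ : ℕ) (hβγ : γ ≤ β) (hγ : 1 ≤ γ) (hαγ : γ ≤ α)
    (hασ : 2 * γ ≤ α + σ) (hσγ : σ < γ) :
    IsCapable (PresentedGroup (twoGenRels p α β γ σ)) ↔ α = β := by
  constructor
  · exact CapAux.forward_dir hp hodd hβγ hγ hαγ hασ hσγ
  · intro h
    subst h
    exact CapAux.backward_dir hp hodd hγ hαγ hασ hσγ
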